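/- If D is Gamma(α, β)-distributed and σ > 0, then E[Q(√(D/(2σ²)))] = (1/π)·∫₀^{π/2} (sin²ψ/(sin²ψ + γ))^α dψ, where γ = β/(4σ²). -/

import Mathlib

open Real MeasureTheory Set

/-- Gaussian tail function Q(x) = (1/√(2π)) ∫ₓ^∞ e^(−t²/2) dt. -/
noncomputable def gaussQ (x : ℝ) : ℝ :=
  (1 / Real.sqrt (2 * π)) * ∫ t in Set.Ioi x, Real.exp (-t ^ 2 / 2)



lemma g_integrable : Integrable (fun t : ℝ => Real.exp (-t ^ 2 / 2)) := by
  have := integrable_exp_neg_mul_sq (b := (1/2)) (by norm_num)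
  convert this using 2 with t
  ring_nf

lemma g_int_Ioi0 : ∫ t in Ioi (0:ℝ), Real.exp (-t ^ 2 / 2) = Real.sqrt (2*π) / 2 := by
  have h := integral_gaussian_Ioi (1/2)
  have e : ∀ t:ℝ, Real.exp (-t^2/2) = Real.exp (-(1/2)*t^2) := fun t => by ring_nf
  simp_rw [e]
  rw [h]
  rw [show π / (1/2) = 2*π by ring]

lemma gaussQ_Ioi_split (x : ℝ) : (∫ t in Ioi x, Real.exp (-t ^ 2 / 2)) =
    (∫ t in Ioi (0:ℝ), Real.exp (-t ^ 2 / 2)) - ∫ t in (0:ℝ)..x, Real.exp (-t ^ 2 / 2) := by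
  have hi := g_integrable
  have h1 := intervalIntegral.integral_Iic_sub_Iic (μ := volume)
      (f := fun t : ℝ => Real.exp (-t ^ 2 / 2)) (a := (0:ℝ)) (b := x)
      hi.integrableOn hi.integrableOn
  have h2 := intervalIntegral.integral_Iic_add_Ioi (μ := volume) (b := x)
      (f := fun t : ℝ => Real.exp (-t ^ 2 / 2)) hi.integrableOn hi.integrableOn
  have h3 := intervalIntegral.integral_Iic_add_Ioi (μ := volume) (b := (0:ℝ))
      (f := fun t : ℝ => Real.exp (-t ^ 2 / 2)) hi.integrableOn hi.integrableOn
  have := h1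
  linarith [h1, h2, h3]

lemma gaussQ_eq (x : ℝ) : gaussQ x = (1 / Real.sqrt (2 * π)) *
    ((Real.sqrt (2*π)/2) - ∫ t in (0:ℝ)..x, Real.exp (-t ^ 2 / 2)) := by
  rw [gaussQ, gaussQ_Ioi_split, g_int_Ioi0]

lemma gaussQ_hasDeriv (x : ℝ) :
    HasDerivAt gaussQ (-(1 / Real.sqrt (2 * π)) * Real.exp (-x ^ 2 / 2)) x := by
  have hF : HasDerivAt (fun y => ∫ t in (0:ℝ)..y, Real.exp (-t ^ 2 / 2))
      (Real.exp (-x ^ 2 / 2)) x := by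
    apply intervalIntegral.integral_hasDerivAt_right
      (g_integrable.intervalIntegrable)
      (g_integrable.1.stronglyMeasurableAtFilter)
    exact (Real.continuous_exp.comp (by continuity)).continuousAt
  have : HasDerivAt (fun y => (1 / Real.sqrt (2 * π)) *
      ((Real.sqrt (2*π)/2) - ∫ t in (0:ℝ)..y, Real.exp (-t ^ 2 / 2)))
      (-(1 / Real.sqrt (2 * π)) * Real.exp (-x ^ 2 / 2)) x := by
    have := ((hasDerivAt_const x (Real.sqrt (2*π)/2)).sub hF).const_mul (1 / Real.sqrt (2 * π))
    exact this.congr_deriv (by ring)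
  exact this.congr_of_eventuallyEq (Filter.Eventually.of_forall fun y => (gaussQ_eq y))

lemma gaussQ_zero : gaussQ 0 = 1/2 := by
  rw [gaussQ, g_int_Ioi0]
  rw [div_mul_eq_mul_div, one_mul, div_div]
  rw [div_eq_iff (by positivity)]
  ring

lemma cot_hasDerivAt {x ψ : ℝ} (hs : Real.sin ψ ≠ 0) :
    HasDerivAt (fun ψ => x * Real.cos ψ / Real.sin ψ) (-x / Real.sin ψ ^ 2) ψ := by
  have h1 : HasDerivAt (fun ψ => x * Real.cos ψ) (x * (-Real.sin ψ)) ψ :=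
    (Real.hasDerivAt_cos ψ).const_mul x
  have h2 := (h1.div (Real.hasDerivAt_sin ψ) hs)
  refine h2.congr_deriv ?_
  rw [show (x * -Real.sin ψ * Real.sin ψ - x * Real.cos ψ * Real.cos ψ)
      = -x * (Real.sin ψ^2 + Real.cos ψ^2) by ring, Real.sin_sq_add_cos_sq, mul_one]

lemma cot_image {x : ℝ} (hx : 0 < x) :
    (fun ψ => x * Real.cos ψ / Real.sin ψ) '' Ioo 0 (π/2) = Ioi (0:ℝ) := by
  have hπ := Real.pi_pos
  ext u
  simp only [mem_image, mem_Ioi]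
  constructor
  · rintro ⟨ψ, ⟨h1, h2⟩, rfl⟩
    have hs : 0 < Real.sin ψ := Real.sin_pos_of_pos_of_lt_pi h1 (by linarith)
    have hc : 0 < Real.cos ψ := Real.cos_pos_of_mem_Ioo ⟨by linarith, h2⟩
    exact div_pos (mul_pos hx hc) hs
  · intro hu
    have hq : 0 < x / u := div_pos hx hu
    refine ⟨Real.arctan (x/u), ⟨by simpa using Real.arctan_strictMono hq, Real.arctan_lt_pi_div_two _⟩, ?_⟩
    have ht : Real.tan (Real.arctan (x/u)) = x/u := Real.tan_arctan _
    have hc : 0 < Real.cos (Real.arctan (x/u)) := Real.cos_arctan_pos _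
    have hs : Real.sin (Real.arctan (x/u)) ≠ 0 := by
      intro h
      rw [Real.tan_eq_sin_div_cos, h] at ht
      simp at ht
      exact absurd ht.symm (ne_of_gt hq)
    rw [Real.tan_eq_sin_div_cos] at ht
    field_simp at ht ⊢
    nlinarith [ht]

lemma cot_injOn {x : ℝ} (hx : 0 < x) :
    InjOn (fun ψ => x * Real.cos ψ / Real.sin ψ) (Ioo 0 (π/2)) := by
  have hπ := Real.pi_pos
  intro a ha b hb hab
  have hsa : 0 < Real.sin a := Real.sin_pos_of_pos_of_lt_pi ha.1 (by linarith [ha.2])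
  have hsb : 0 < Real.sin b := Real.sin_pos_of_pos_of_lt_pi hb.1 (by linarith [hb.2])
  have hca : 0 < Real.cos a := Real.cos_pos_of_mem_Ioo ⟨by linarith [ha.1], ha.2⟩
  have hcb : 0 < Real.cos b := Real.cos_pos_of_mem_Ioo ⟨by linarith [hb.1], hb.2⟩
  have htan : Real.tan a = Real.tan b := by
    rw [Real.tan_eq_sin_div_cos, Real.tan_eq_sin_div_cos]
    simp only at hab
    field_simp at hab ⊢
    nlinarith [hab]
  exact Real.injOn_tan ⟨by linarith [ha.1], ha.2⟩ ⟨by linarith [hb.1], hb.2⟩ htan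

lemma craig_subst {x : ℝ} (hx : 0 < x) :
    ∫ ψ in Ioo 0 (π/2), (x / Real.sin ψ ^ 2) * Real.exp (-x^2 / (2 * Real.sin ψ^2))
      = Real.sqrt (2*π)/2 * Real.exp (-x^2/2) := by
  have hπ := Real.pi_pos
  have key := integral_image_eq_integral_abs_deriv_smul (f := fun ψ => x * Real.cos ψ / Real.sin ψ)
      (f' := fun ψ => -x / Real.sin ψ ^ 2) measurableSet_Ioo
      (fun ψ hψ => (cot_hasDerivAt (ne_of_gt (Real.sin_pos_of_pos_of_lt_pi hψ.1
        (by linarith [hψ.2])))).hasDerivWithinAt)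
      (cot_injOn hx) (fun u => Real.exp (-(x^2+u^2)/2))
  rw [cot_image hx] at key
  have lhs_eq : ∫ u in Ioi (0:ℝ), Real.exp (-(x^2+u^2)/2)
      = Real.sqrt (2*π)/2 * Real.exp (-x^2/2) := by
    have : ∀ u:ℝ, Real.exp (-(x^2+u^2)/2) = Real.exp (-x^2/2) * Real.exp (-u^2/2) := by
      intro u; rw [← Real.exp_add]; ring_nf
    simp_rw [this]
    rw [MeasureTheory.integral_const_mul, g_int_Ioi0]
    ring
  rw [lhs_eq] at key
  rw [key]
  apply setIntegral_congr_fun measurableSet_Ioo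
  intro ψ hψ
  have hs : 0 < Real.sin ψ := Real.sin_pos_of_pos_of_lt_pi hψ.1 (by linarith [hψ.2])
  have habs : |(-x / Real.sin ψ ^ 2)| = x / Real.sin ψ ^ 2 := by
    rw [abs_div, abs_neg, abs_of_pos hx, abs_of_pos (by positivity : (0:ℝ) < Real.sin ψ ^ 2)]
  simp only [smul_eq_mul]
  rw [habs]
  congr 1
  have hexp : (x * Real.cos ψ / Real.sin ψ)^2 = x^2 * (1 - Real.sin ψ^2) / Real.sin ψ^2 := by
    rw [div_pow, mul_pow, Real.cos_sq']
  rw [hexp]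
  field_simp
  ring
noncomputable def craigF (x : ℝ) : ℝ := ∫ ψ in Ioo 0 (π/2), Real.exp (-x^2 / (2 * Real.sin ψ^2))

lemma t_exp_le (t : ℝ) : t * Real.exp (-t) ≤ Real.exp (-1) := by
  have h := Real.add_one_le_exp (t - 1)
  have h2 : t ≤ Real.exp (t-1) := by linarith
  calc t * Real.exp (-t) ≤ Real.exp (t-1) * Real.exp (-t) :=
        mul_le_mul_of_nonneg_right h2 (Real.exp_pos _).le
    _ = Real.exp (-1) := by rw [← Real.exp_add]; ring_nf

lemma craig_meas (x : ℝ) : Measurable fun ψ : ℝ => Real.exp (-x^2 / (2 * Real.sin ψ^2)) :=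
  Real.measurable_exp.comp (measurable_const.div
    ((measurable_const.mul (Real.measurable_sin.pow_const 2))))

lemma craig_exp_le_one (x : ℝ) (ψ : ℝ) : Real.exp (-x^2 / (2 * Real.sin ψ^2)) ≤ 1 := by
  rw [Real.exp_le_one_iff]
  rw [neg_div]
  simp only [neg_nonpos]
  positivity

lemma const_integrable (C : ℝ) : Integrable (fun _ : ℝ => C) (volume.restrict (Ioo 0 (π/2))) :=
  integrableOn_const measure_Ioo_lt_top.ne

lemma craigF_hasDeriv {x₀ : ℝ} (hx : 0 < x₀) :
    HasDerivAt craigF (-(Real.sqrt (2*π)/2 * Real.exp (-x₀^2/2))) x₀ := by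
  have hπ := Real.pi_pos
  set μ := volume.restrict (Ioo 0 (π/2)) with hμ
  have main := hasDerivAt_integral_of_dominated_loc_of_deriv_le (μ := μ)
    (F := fun x ψ => Real.exp (-x^2 / (2 * Real.sin ψ^2)))
    (F' := fun x ψ => -((x / Real.sin ψ^2) * Real.exp (-x^2 / (2 * Real.sin ψ^2))))
    (x₀ := x₀) (s := Metric.ball x₀ (x₀/2)) (bound := fun _ => 4/x₀ * Real.exp (-1))
    (Metric.ball_mem_nhds _ (by linarith))
    (Filter.Eventually.of_forall fun x => (craig_meas x).aestronglyMeasurable)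
    ((const_integrable 1).mono' (craig_meas x₀).aestronglyMeasurable
      (Filter.Eventually.of_forall fun ψ => by
        rw [Real.norm_eq_abs, abs_of_pos (Real.exp_pos _)]
        exact craig_exp_le_one x₀ ψ))
    (((measurable_const.div (Real.measurable_sin.pow_const 2)).mul (craig_meas x₀)).neg.aestronglyMeasurable)
    ?_ (const_integrable _) ?_
  · obtain ⟨-, hD⟩ := main
    refine hD.congr_deriv ?_
    have : ∀ ψ : ℝ, -((x₀ / Real.sin ψ^2) * Real.exp (-x₀^2 / (2 * Real.sin ψ^2)))
        = -((fun ψ => (x₀ / Real.sin ψ^2) * Real.exp (-x₀^2 / (2 * Real.sin ψ^2))) ψ) := fun _ => rfl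
    rw [hμ]
    rw [MeasureTheory.integral_neg]
    rw [craig_subst hx]
  · -- bound
    rw [hμ]
    filter_upwards [ae_restrict_mem measurableSet_Ioo] with ψ hψ
    intro x hx'
    have hs : 0 < Real.sin ψ := Real.sin_pos_of_pos_of_lt_pi hψ.1 (by linarith [hψ.2])
    rw [Metric.mem_ball, Real.dist_eq, abs_lt] at hx'
    have hxpos : x₀/2 < x := by linarith
    have hx0 : 0 < x := by linarith
    rw [Real.norm_eq_abs, abs_neg, abs_of_nonneg (by positivity)]
    have heq : (x / Real.sin ψ^2) * Real.exp (-x^2 / (2 * Real.sin ψ^2))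
        = (2/x) * ((x^2/(2*Real.sin ψ^2)) * Real.exp (-(x^2/(2*Real.sin ψ^2)))) := by
      rw [neg_div]
      field_simp
    rw [heq]
    calc (2/x) * ((x^2/(2*Real.sin ψ^2)) * Real.exp (-(x^2/(2*Real.sin ψ^2))))
        ≤ (2/x) * Real.exp (-1) := by
          apply mul_le_mul_of_nonneg_left (t_exp_le _) (by positivity)
      _ ≤ 4/x₀ * Real.exp (-1) := by
          apply mul_le_mul_of_nonneg_right _ (Real.exp_pos _).le
          rw [div_le_div_iff₀ hx0 hx]
          linarith
  · -- differentiability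
    rw [hμ]
    filter_upwards [ae_restrict_mem measurableSet_Ioo] with ψ hψ
    intro x hx'
    have hs : 0 < Real.sin ψ := Real.sin_pos_of_pos_of_lt_pi hψ.1 (by linarith [hψ.2])
    have hg : HasDerivAt (fun x : ℝ => -x^2 / (2 * Real.sin ψ^2))
        (-(x / Real.sin ψ^2)) x := by
      have := ((hasDerivAt_pow 2 x).neg).div_const (2 * Real.sin ψ^2)
      refine this.congr_deriv ?_
      field_simp
      ring
    have := hg.exp
    refine this.congr_deriv ?_
    ring
lemma craigF_zero : craigF 0 = π/2 := by
  have hπ := Real.pi_pos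
  rw [craigF]
  have : ∀ ψ : ℝ, Real.exp (-(0:ℝ)^2 / (2 * Real.sin ψ^2)) = 1 := by
    intro ψ; norm_num
  simp_rw [this]
  simp [Real.volume_Ioo]
  linarith

lemma craigF_contAt_zero : ContinuousAt craigF 0 := by
  have hπ := Real.pi_pos
  apply MeasureTheory.continuousAt_of_dominated
    (bound := fun _ => (1:ℝ))
    (Filter.Eventually.of_forall fun x => (craig_meas x).aestronglyMeasurable)
    (Filter.Eventually.of_forall fun x => Filter.Eventually.of_forall fun ψ => by
      rw [Real.norm_eq_abs, abs_of_pos (Real.exp_pos _)]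
      exact craig_exp_le_one x ψ)
    (const_integrable 1)
  filter_upwards [ae_restrict_mem measurableSet_Ioo] with ψ hψ
  have hs : 0 < Real.sin ψ := Real.sin_pos_of_pos_of_lt_pi hψ.1 (by linarith [hψ.2])
  apply Continuous.continuousAt
  apply Real.continuous_exp.comp
  apply Continuous.div_const
  continuity

lemma craig {x : ℝ} (hx : 0 < x) : gaussQ x = (1/π) * craigF x := by
  have hπ := Real.pi_pos
  have hsq : Real.sqrt (2*π) > 0 := Real.sqrt_pos.mpr (by linarith)
  set H : ℝ → ℝ := fun y => gaussQ y - (1/π) * craigF y with hH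
  have hderiv : ∀ y, 0 < y → HasDerivAt H 0 y := by
    intro y hy
    have h1 := gaussQ_hasDeriv y
    have h2 := (craigF_hasDeriv hy).const_mul (1/π)
    have := h1.sub h2
    refine this.congr_deriv ?_
    have hss : Real.sqrt (2*π) * Real.sqrt (2*π) = 2*π := Real.mul_self_sqrt (by linarith)
    have h3 : (1:ℝ)/Real.sqrt (2*π) = Real.sqrt (2*π)/(2*π) := by
      rw [div_eq_div_iff hsq.ne' (by positivity : (2*π:ℝ) ≠ 0), one_mul, hss]
    rw [h3]
    field_simp
    ring
  have hconst : ∀ ε, 0 < ε → ε ≤ x → H x = H ε := by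
    intro ε hε hεx
    have := constant_of_has_deriv_right_zero (f := H) (a := ε) (b := x)
      (fun y hy => ((hderiv y (lt_of_lt_of_le hε hy.1)).continuousAt).continuousWithinAt)
      (fun y hy => ((hderiv y (lt_of_lt_of_le hε hy.1)).hasDerivWithinAt))
    exact this x ⟨hεx, le_refl x⟩
  have hH0 : H 0 = 0 := by
    rw [hH]; simp only
    rw [gaussQ_zero, craigF_zero]
    field_simp
    ring
  have htend : Filter.Tendsto H (nhdsWithin 0 (Ioi 0)) (nhds 0) := by
    have hc : ContinuousAt H 0 := by
      apply ContinuousAt.sub (gaussQ_hasDeriv 0).continuousAt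
      exact (craigF_contAt_zero.const_mul _)
    have h := hc.tendsto
    rw [hH0] at h
    exact h.mono_left nhdsWithin_le_nhds
  have heq : ∀ᶠ ε in nhdsWithin 0 (Ioi 0), H ε = H x := by
    filter_upwards [Ioc_mem_nhdsGT_of_mem ⟨le_refl (0:ℝ), hx⟩] with ε hε
    exact (hconst ε hε.1 hε.2).symm
  have : Filter.Tendsto (fun _ : ℝ => H x) (nhdsWithin 0 (Ioi 0)) (nhds 0) :=
    htend.congr' heq
  have hHx : H x = 0 := tendsto_nhds_unique tendsto_const_nhds this
  rw [hH] at hHx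
  simp only at hHx
  linarith
/-- Average PEP over a Gamma(α,β) squared distance D:
    E[Q(√(D/(2σ²)))] = (1/π) ∫₀^{π/2} (sin²ψ/(sin²ψ+γ))^α dψ with γ = β/(4σ²). -/
theorem gamma_average_pep (α β σ : ℝ) (hα : 0 < α) (hβ : 0 < β) (hσ : 0 < σ) :
    ∫ d in Ioi (0:ℝ), gaussQ (Real.sqrt (d / (2 * σ ^ 2))) *
        (d ^ (α - 1) * Real.exp (-d / β) / (Real.Gamma α * β ^ α)) =
      (1 / π) * ∫ ψ in (0:ℝ)..(π / 2),
        (Real.sin ψ ^ 2 / (Real.sin ψ ^ 2 + β / (4 * σ ^ 2))) ^ α := by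
  have hπ := Real.pi_pos
  have hΓ : 0 < Real.Gamma α := Real.Gamma_pos_of_pos hα
  have hβα : 0 < β ^ α := Real.rpow_pos_of_pos hβ α
  set pdf : ℝ → ℝ := fun d => d ^ (α - 1) * Real.exp (-d / β) / (Real.Gamma α * β ^ α)
    with hpdfdef
  -- the joint integrand
  set f : ℝ → ℝ → ℝ := fun d ψ =>
    Real.exp (-(d / (2 * σ ^ 2)) / (2 * Real.sin ψ ^ 2)) * pdf d with hfdef
  -- Step 1: rewrite LHS using Craig's formula
  have step1 : ∫ d in Ioi (0:ℝ), gaussQ (Real.sqrt (d / (2 * σ ^ 2))) * pdf d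
      = (1/π) * ∫ d in Ioi (0:ℝ), ∫ ψ in Ioo 0 (π/2), f d ψ := by
    rw [← MeasureTheory.integral_const_mul]
    apply setIntegral_congr_fun measurableSet_Ioi
    intro d hd
    simp only
    have hd0 : (0:ℝ) < d := hd
    have harg : (0:ℝ) < d / (2 * σ ^ 2) := by positivity
    have hx : 0 < Real.sqrt (d / (2 * σ ^ 2)) := Real.sqrt_pos.mpr harg
    rw [craig hx, craigF]
    have hsq : Real.sqrt (d / (2 * σ ^ 2)) ^ 2 = d / (2 * σ ^ 2) :=
      Real.sq_sqrt harg.le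
    simp only [hsq]
    rw [mul_assoc]
    congr 1
    rw [← MeasureTheory.integral_mul_const]
  rw [step1]
  -- Step 2: Fubini
  have hpdf_int : IntegrableOn pdf (Ioi 0) := by
    have h0 := integrableOn_rpow_mul_exp_neg_mul_rpow
      (s := α - 1) (p := 1) (b := 1/β) (by linarith) zero_lt_one (by positivity)
    have heq : ∀ x : ℝ, x ^ (α-1) * Real.exp (-(1/β) * x ^ (1:ℝ))
        = x ^ (α-1) * Real.exp (-x/β) := by
      intro x
      rw [Real.rpow_one]
      congr 1
      ring_nf
    simp_rw [heq] at h0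
    exact h0.div_const _
  have hpdf_nonneg : ∀ d, 0 < d → 0 ≤ pdf d := by
    intro d hd
    rw [hpdfdef]
    positivity
  have hfmeas : AEStronglyMeasurable (Function.uncurry f)
      ((volume.restrict (Ioi 0)).prod (volume.restrict (Ioo 0 (π/2)))) := by
    apply Measurable.aestronglyMeasurable
    apply Measurable.mul
    · exact Real.measurable_exp.comp
        (((measurable_fst.div_const (2*σ^2)).neg).div
          (measurable_const.mul ((Real.measurable_sin.comp measurable_snd).pow_const 2)))
    · have h1 : Measurable fun z : ℝ × ℝ => z.1 ^ (α - 1) := by fun_prop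
      exact (h1.mul
        (Real.measurable_exp.comp (measurable_fst.neg.div_const β))).div_const _
  have hf_int : Integrable (Function.uncurry f)
      ((volume.restrict (Ioi 0)).prod (volume.restrict (Ioo 0 (π/2)))) := by
    have hmaj : Integrable (fun z : ℝ × ℝ => pdf z.1 * 1)
        ((volume.restrict (Ioi 0)).prod (volume.restrict (Ioo 0 (π/2)))) :=
      hpdf_int.mul_prod (const_integrable 1)
    apply hmaj.mono' hfmeas
    rw [Measure.prod_restrict]
    filter_upwards [ae_restrict_mem (measurableSet_Ioi.prod measurableSet_Ioo)] with z hz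
    obtain ⟨hz1, hz2⟩ := hz
    have hd0 : (0:ℝ) < z.1 := hz1
    have hexple : Real.exp (-(z.1 / (2 * σ ^ 2)) / (2 * Real.sin z.2 ^ 2)) ≤ 1 := by
      rw [Real.exp_le_one_iff, neg_div]
      simp only [neg_nonpos]
      positivity
    rw [Real.norm_eq_abs, Function.uncurry, hfdef]
    simp only
    rw [abs_mul, abs_of_pos (Real.exp_pos _), abs_of_nonneg (hpdf_nonneg _ hd0), mul_one]
    exact mul_le_of_le_one_left (hpdf_nonneg _ hd0) hexple
  rw [MeasureTheory.integral_integral_swap hf_int]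
  -- Step 3: inner Gamma integral
  have inner : ∀ ψ ∈ Ioo (0:ℝ) (π/2), (∫ d in Ioi (0:ℝ), f d ψ)
      = (Real.sin ψ ^ 2 / (Real.sin ψ ^ 2 + β / (4 * σ ^ 2))) ^ α := by
    intro ψ hψ
    have hs : 0 < Real.sin ψ := Real.sin_pos_of_pos_of_lt_pi hψ.1 (by linarith [hψ.2])
    set s2 := Real.sin ψ ^ 2 with hs2def
    have hs2 : 0 < s2 := by positivity
    set r : ℝ := 1/(4 * σ^2 * s2) + 1/β with hrdef
    have hr : 0 < r := by positivity
    have hcongr : ∀ d ∈ Ioi (0:ℝ), f d ψ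
        = d ^ (α-1) * Real.exp (-(r * d)) / (Real.Gamma α * β ^ α) := by
      intro d hd
      have hexp : Real.exp (-(d / (2*σ^2)) / (2*s2)) * Real.exp (-d/β)
          = Real.exp (-(r * d)) := by
        rw [← Real.exp_add]
        congr 1
        rw [hrdef]
        field_simp
        ring
      rw [hfdef, hpdfdef]
      simp only
      rw [div_eq_mul_inv, div_eq_mul_inv, ← hexp]
      rw [hs2def]
      ring
    rw [setIntegral_congr_fun measurableSet_Ioi hcongr]
    rw [MeasureTheory.integral_div, Real.integral_rpow_mul_exp_neg_mul_Ioi hα hr]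
    rw [show (1/r) ^ α * Real.Gamma α / (Real.Gamma α * β ^ α)
        = (1/r) ^ α / β ^ α from by field_simp]
    rw [← Real.div_rpow (by positivity) hβ.le]
    congr 1
    rw [hrdef]
    field_simp
    ring
  rw [setIntegral_congr_fun measurableSet_Ioo inner]
  -- Step 4: match the interval integral
  congr 1
  rw [intervalIntegral.integral_of_le (by linarith), MeasureTheory.integral_Ioc_eq_integral_Ioo]
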